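/- Let s ≥ 2. The polynomial f(X) = X^{s+1} + X + 1 over F_s is separable (has s+1 distinct roots in the algebraic closure), and since s + 1 ≥ 3, there exists a root a of f with a² + a + 1 ≠ 0. -/
import Mathlib

open Polynomial

/-- For s a prime power, f(X) = X^{s+1}+X+1 is separable with s+1
distinct roots in the algebraic closure, and there is a root a with a²+a+1 ≠ 0. -/
theorem stmt9 {K : Type*} [Field K] [IsAlgClosed K] (p n s : ℕ)
    (hp : p.Prime) [CharP K p] (hs : s = p ^ n) (hn : 0 < n) :
    (Polynomial.X ^ (s + 1) + Polynomial.X + 1 : Polynomial K).Separable ∧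
    (Polynomial.X ^ (s + 1) + Polynomial.X + 1 : Polynomial K).roots.Nodup ∧
    Multiset.card (Polynomial.X ^ (s + 1) + Polynomial.X + 1 : Polynomial K).roots
        = s + 1 ∧
    ∃ a : K, a ^ (s + 1) + a + 1 = 0 ∧ a ^ 2 + a + 1 ≠ 0 := by
  set f : Polynomial K := X ^ (s + 1) + X + 1 with hf
  have hs2 : 2 ≤ s := by
    subst hs
    calc 2 ≤ p := hp.two_le
    _ = p ^ 1 := (pow_one p).symm
    _ ≤ p ^ n := Nat.pow_le_pow_right hp.pos hn
  have hs0 : (s : K) = 0 := by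
    subst hs
    push_cast
    rw [CharP.cast_eq_zero K p, zero_pow hn.ne']
  have hderiv : Polynomial.derivative f = X ^ s + 1 := by
    simp only [hf, derivative_add, derivative_one, derivative_X, derivative_X_pow,
      Nat.add_sub_cancel, Nat.cast_add, Nat.cast_one, hs0, map_add, map_one, map_zero,
      Polynomial.C_0, zero_add, add_zero, one_mul]
  have hsep : f.Separable := by
    refine ⟨1, -X, ?_⟩
    rw [hderiv, hf]
    ring
  have hnodup : f.roots.Nodup := Polynomial.nodup_roots hsep
  have hdeg : f.natDegree = s + 1 := by
    rw [hf]
    compute_degree!; simp [show s ≠ 0 by omega]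
  have hcard : Multiset.card f.roots = s + 1 := by
    rw [← hdeg]
    exact (Polynomial.splits_iff_card_roots.mp (IsAlgClosed.splits f))
  refine ⟨hsep, hnodup, hcard, ?_⟩
  have hf0 : f ≠ 0 := fun h => by simp [h] at hdeg
  set g : Polynomial K := X ^ 2 + X + 1 with hg
  have hgd : g.natDegree = 2 := by rw [hg]; compute_degree!
  have hg0 : g ≠ 0 := fun h => by simp [h] at hgd
  by_contra hcon
  push_neg at hcon
  have hsub : f.roots ⊆ g.roots := by
    intro a ha
    have haf : f.eval a = 0 := (Polynomial.mem_roots hf0).mp ha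
    have : a ^ (s + 1) + a + 1 = 0 := by simpa [hf] using haf
    have hga : a ^ 2 + a + 1 = 0 := hcon a this
    refine (Polynomial.mem_roots hg0).mpr ?_
    simpa [hg, Polynomial.IsRoot] using hga
  have hle : f.roots ≤ g.roots := (Multiset.le_iff_subset hnodup).mpr hsub
  have := Multiset.card_le_card hle
  have hg2 : Multiset.card g.roots ≤ 2 := by
    have := Polynomial.card_roots' g
    omega
  omega
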